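/- Let (a_n)_{n≥0} be a sequence of natural numbers with a_0 = 0, and define, for each n ≥ 0, c_n = ∑_P ∏_{B ∈ P} a_{|B|}, where the sum ranges over all partitions P of the finite set {1,…,n} into nonempty blocks (c_0 = 1, corresponding to the empty partition). Then, as an identity of formal power series over ℚ (equivalently ℝ), the exponential generating functions satisfy ∑_{n≥0} c_n X^n/n! = exp(∑_{n≥1} a_n X^n/n!). That is, the exponential generating function of the class of sets of labelled A-structures is the exponential of the exponential generating function of A. -/

import Mathlib

open Finset Function

set_option linter.unusedSectionVars false

namespace ExpFormula19

variable (a : ℕ → ℕ)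

/-- Sum over all functions `α → Fin k` of the product over colors of `a (fiber size)`. -/
def WT (k : ℕ) (α : Type) [Fintype α] [DecidableEq α] : ℕ :=
  ∑ g : α → Fin k, ∏ i : Fin k, a (#(univ.filter fun x => g x = i))

lemma WT_congr {α β : Type} [Fintype α] [DecidableEq α] [Fintype β] [DecidableEq β]
    (e : α ≃ β) (k : ℕ) : WT a k α = WT a k β := by
  unfold WT
  refine Fintype.sum_equiv (Equiv.arrowCongr e (Equiv.refl (Fin k)))
    (fun g => ∏ i : Fin k, a (#(univ.filter fun x => g x = i)))
    (fun g => ∏ i : Fin k, a (#(univ.filter fun x => g x = i))) fun g => ?_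
  refine Finset.prod_congr rfl fun i _ => ?_
  congr 1
  refine Finset.card_bij' (fun x _ => e x) (fun y _ => e.symm y) ?_ ?_ ?_ ?_ <;>
    simp [Equiv.arrowCongr]

lemma WT_zero (n : ℕ) : WT a 0 (Fin n) = if n = 0 then 1 else 0 := by
  rcases n with _ | n
  · simp [WT]
  · haveI : IsEmpty (Fin (n + 1) → Fin 0) := ⟨fun g => (g 0).elim0⟩
    simp [WT]


lemma WT_succ (k : ℕ) (α : Type) [Fintype α] [DecidableEq α] :
    WT a (k + 1) α = ∑ S : Finset α, a #S * WT a k {x // x ∈ Sᶜ} := by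
  classical
  unfold WT
  rw [← Finset.sum_fiberwise (univ : Finset (α → Fin (k + 1)))
      (fun g => univ.filter fun x => g x = Fin.last k)
      (fun g => ∏ i : Fin (k + 1), a (#(univ.filter fun x => g x = i)))]
  refine Finset.sum_congr rfl fun S _ => ?_
  rw [Finset.mul_sum]
  have hne : ∀ (g : α → Fin (k + 1)),
      g ∈ univ.filter (fun g => univ.filter (fun x => g x = Fin.last k) = S) →
      ∀ y : {x // x ∈ Sᶜ}, g y.1 ≠ Fin.last k := by
    intro g hg y hy
    simp only [mem_filter, mem_univ, true_and] at hg
    have h1 : y.1 ∈ univ.filter (fun x => g x = Fin.last k) := by simp [hy]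
    rw [hg] at h1
    have h2 := y.2
    simp only [mem_compl] at h2
    exact h2 h1
  refine Finset.sum_bij'
    (i := fun g hg => fun y : {x // x ∈ Sᶜ} => (g y.1).castPred (hne g hg y))
    (j := fun h _ => fun x => if hx : x ∈ S then Fin.last k else (h ⟨x, by simp [hx]⟩).castSucc)
    (fun g hg => mem_univ _) ?_ ?_ ?_ ?_
  · -- hj : j h ∈ filter
    intro h _
    simp only [mem_filter, mem_univ, true_and]
    ext x
    by_cases hx : x ∈ S <;> simp [hx, (Fin.castSucc_lt_last _).ne]
  · -- left inverse : j (i g) = g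
    intro g hg'
    have hg : univ.filter (fun x => g x = Fin.last k) = S := by
      simpa using (mem_filter.mp hg').2
    funext x
    show (if hx : x ∈ S then Fin.last k else _) = g x
    by_cases hx : x ∈ S
    · rw [dif_pos hx]
      rw [← hg] at hx
      simp only [mem_filter, mem_univ, true_and] at hx
      exact hx.symm
    · rw [dif_neg hx, Fin.castSucc_castPred]
  · -- right inverse : i (j h) = h
    intro h _
    funext y
    have hy : y.1 ∉ S := mem_compl.mp y.2
    show Fin.castPred (if hx : y.1 ∈ S then Fin.last k else _) _ = h y
    simp only [dif_neg hy, Fin.castPred_castSucc]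
  · -- values
    intro g hg'
    have hgS : univ.filter (fun x => g x = Fin.last k) = S := by
      simpa using (mem_filter.mp hg').2
    rw [Fin.prod_univ_castSucc, hgS, mul_comm]
    congr 1
    refine Finset.prod_congr rfl fun i _ => ?_
    congr 1
    refine Finset.card_bij'
      (i := fun x (hx : x ∈ univ.filter fun x => g x = Fin.castSucc i) =>
        (⟨x, by
          simp only [mem_filter, mem_univ, true_and] at hx
          simp only [mem_compl, ← hgS, mem_filter, mem_univ, true_and, hx,
            (Fin.castSucc_lt_last i).ne, not_false_iff]⟩ : {x // x ∈ Sᶜ}))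
      (j := fun y _ => y.1) ?_ ?_ ?_ ?_
    · intro x hx
      simp only [mem_filter, mem_univ, true_and] at hx ⊢
      have : (Fin.castSucc i).castPred (Fin.ne_last_of_lt (Fin.castSucc_lt_last i)) = i :=
        Fin.castPred_castSucc _
      simp only [show g x = Fin.castSucc i from hx]
      exact Fin.castPred_castSucc _
    · intro y hy
      simp only [mem_filter, mem_univ, true_and] at hy ⊢
      have := congrArg Fin.castSucc hy
      rwa [Fin.castSucc_castPred] at this
    · intro x hx; rfl
    · intro y hy; rfl


lemma WT_subtype {α : Type} [Fintype α] [DecidableEq α] (k : ℕ) (s : Finset α) :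
    WT a k {x // x ∈ s} = WT a k (Fin #s) :=
  WT_congr a s.equivFin k

lemma WT_succ_fin (k n : ℕ) :
    WT a (k + 1) (Fin n)
      = ∑ q ∈ range (n + 1), n.choose q * (a q * WT a k (Fin (n - q))) := by
  rw [WT_succ]
  have h1 : ∀ S : Finset (Fin n),
      a #S * WT a k {x // x ∈ Sᶜ} = a #S * WT a k (Fin (n - #S)) := by
    intro S
    rw [WT_subtype, card_compl, Fintype.card_fin]
  rw [Finset.sum_congr rfl fun S _ => h1 S]
  rw [← Finset.powerset_univ, Finset.sum_powerset]
  rw [card_univ, Fintype.card_fin]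
  refine Finset.sum_congr rfl fun q _ => ?_
  rw [Finset.sum_powersetCard q univ (fun m => a m * WT a k (Fin (n - m)))]
  rw [card_univ, Fintype.card_fin, smul_eq_mul]

lemma coeff_pow_eq (k n : ℕ) :
    PowerSeries.coeff (R := ℚ) n ((PowerSeries.mk fun m : ℕ => (a m : ℚ) / m.factorial) ^ k)
      = (WT a k (Fin n) : ℚ) / n.factorial := by
  induction k generalizing n with
  | zero =>
    rw [pow_zero, WT_zero, PowerSeries.coeff_one]
    split <;> simp_all [Nat.factorial]
  | succ k ih =>
    rw [pow_succ, PowerSeries.coeff_mul, Finset.Nat.sum_antidiagonal_eq_sum_range_succ_mk,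
      WT_succ_fin]
    push_cast
    rw [Finset.sum_div, ← Finset.sum_range_reflect]
    simp only [Nat.succ_sub_one, Nat.add_sub_cancel]
    refine Finset.sum_congr rfl fun q hq => ?_
    have hqn : q ≤ n := Nat.lt_succ_iff.mp (Finset.mem_range.mp hq)
    have hsub : n - (n - q) = q := Nat.sub_sub_self hqn
    rw [ih, PowerSeries.coeff_mk, hsub]
    have key : ((n.choose q : ℚ)) * q.factorial * (n - q).factorial = n.factorial := by
      exact_mod_cast congrArg (Nat.cast (R := ℚ)) (Nat.choose_mul_factorial_mul_factorial hqn)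
    have h2 : ((n - q).factorial : ℚ) ≠ 0 := by
      exact_mod_cast (n - q).factorial_ne_zero
    have h3 : (q.factorial : ℚ) ≠ 0 := by exact_mod_cast q.factorial_ne_zero
    have h4 : (n.factorial : ℚ) ≠ 0 := by exact_mod_cast n.factorial_ne_zero
    have h5 : (n.choose q : ℚ) ≠ 0 := by
      exact_mod_cast (Nat.choose_pos hqn).ne'
    rw [← key]
    field_simp


section Fibers

variable {α : Type} [Fintype α] [DecidableEq α] {k : ℕ}

/-- The fiber of `g` over `i`. -/
def fiber (g : α → Fin k) (i : Fin k) : Finset α := univ.filter fun x => g x = i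

instance kerDec (g : α → Fin k) : DecidableRel (Setoid.ker g).r :=
  fun x y => decEq (g x) (g y)

/-- The partition of `univ` into fibers of `g`. -/
def pi (g : α → Fin k) : Finpartition (univ : Finset α) :=
  Finpartition.ofSetoid (Setoid.ker g)

lemma pi_parts (g : α → Fin k) :
    (pi g).parts = univ.image fun x => fiber g (g x) := by
  show (univ.image fun x => ({b | (Setoid.ker g).r x b} : Finset α)) = _
  refine Finset.image_congr fun x _ => ?_
  ext b
  simp [Setoid.ker, Function.onFun, fiber, eq_comm]

lemma pi_part (g : α → Fin k) (x : α) : (pi g).part x = fiber g (g x) := by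
  ext b
  rw [pi, Finpartition.mem_part_ofSetoid_iff_rel]
  simp [Setoid.ker, Function.onFun, fiber, eq_comm]

lemma fiber_injective {g : α → Fin k} (hg : Surjective g) : Injective (fiber g) := by
  intro i j h
  obtain ⟨x, hx⟩ := hg i
  have h1 : x ∈ fiber g i := by simp [fiber, hx]
  rw [h] at h1
  simp only [fiber, mem_filter, mem_univ, true_and] at h1
  rw [← hx, h1]

lemma pi_parts_surj {g : α → Fin k} (hg : Surjective g) :
    (pi g).parts = univ.image (fiber g) := by
  rw [pi_parts, ← Finset.image_univ_of_surjective hg, Finset.image_image]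
  rfl

lemma weight_eq {g : α → Fin k} (hg : Surjective g) :
    ∏ B ∈ (pi g).parts, a #B = ∏ i : Fin k, a (#(univ.filter fun x => g x = i)) := by
  rw [pi_parts_surj hg, Finset.prod_image fun i _ j _ h => fiber_injective hg h]
  rfl

lemma mem_iff_part_eq (P : Finpartition (univ : Finset α)) {B : Finset α}
    (hB : B ∈ P.parts) (b : α) : b ∈ B ↔ P.part b = B :=
  ⟨fun h => P.part_eq_of_mem hB h, fun h => h ▸ P.mem_part (mem_univ b)⟩

lemma count_surj (P : Finpartition (univ : Finset α)) (hP : #P.parts = k) :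
    #(univ.filter fun g : α → Fin k => pi g = P ∧ Surjective g) = k.factorial := by
  have hcard : Fintype.card {B // B ∈ P.parts} = k := by
    rw [Fintype.card_coe, hP]
  have hcard' : Fintype.card (Fin k) = Fintype.card {B // B ∈ P.parts} := by
    simp [hcard]
  have hcount : #(univ : Finset (Fin k ≃ {B // B ∈ P.parts})) = k.factorial := by
    rw [Finset.card_univ, Fintype.card_equiv (Fintype.equivOfCardEq hcard'), Fintype.card_fin]
  rw [← hcount]
  refine Finset.card_bij'
    (i := fun g hg => Equiv.ofBijective
      (fun i => (⟨fiber g i, by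
        have h := (Finset.mem_filter.mp hg).2
        rw [← h.1, pi_parts_surj h.2]
        exact mem_image_of_mem _ (mem_univ i)⟩ : {B // B ∈ P.parts}))
      (by
        have h := (Finset.mem_filter.mp hg).2
        rw [Fintype.bijective_iff_injective_and_card]
        refine ⟨fun i j hij => fiber_injective h.2 (congrArg Subtype.val hij), by simp [hcard]⟩))
    (j := fun e _ => fun x => e.symm ⟨P.part x, P.part_mem.mpr (mem_univ x)⟩)
    (fun _ _ => mem_univ _) ?_ ?_ ?_
  · -- j lands in the filter
    intro e _
    simp only [mem_filter, mem_univ, true_and]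
    set g := fun x => e.symm ⟨P.part x, P.part_mem.mpr (mem_univ x)⟩ with hgdef
    have hpart : ∀ x, fiber g (g x) = P.part x := by
      intro x
      ext b
      simp only [fiber, mem_filter, mem_univ, true_and, hgdef]
      rw [Equiv.apply_eq_iff_eq e.symm, Subtype.mk.injEq]
      exact (P.mem_part_iff_part_eq_part (mem_univ b) (mem_univ x)).symm
    constructor
    · ext B
      rw [pi_parts]
      simp only [mem_image, mem_univ, true_and]
      constructor
      · rintro ⟨x, rfl⟩
        rw [hpart]
        exact P.part_mem.mpr (mem_univ x)
      · intro hB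
        obtain ⟨x, hx⟩ := P.nonempty_of_mem_parts hB
        exact ⟨x, by rw [hpart, P.part_eq_of_mem hB hx]⟩
    · intro i
      obtain ⟨x, hx⟩ := P.nonempty_of_mem_parts (e i).2
      refine ⟨x, ?_⟩
      show e.symm ⟨P.part x, _⟩ = i
      rw [Equiv.symm_apply_eq]
      exact Subtype.ext (P.part_eq_of_mem (e i).2 hx)
  · -- left inverse
    intro g hg
    have h := (Finset.mem_filter.mp hg).2
    funext x
    rw [Equiv.symm_apply_eq]
    refine Subtype.ext ?_
    show P.part x = fiber g (g x)
    rw [← h.1, pi_part]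
  · -- right inverse
    intro e _
    refine Equiv.ext fun i => ?_
    show (⟨fiber _ i, _⟩ : {B // B ∈ P.parts}) = e i
    refine Subtype.ext ?_
    show fiber (fun x => e.symm ⟨P.part x, P.part_mem.mpr (mem_univ x)⟩) i = (e i).1
    ext b
    simp only [fiber, mem_filter, mem_univ, true_and]
    rw [Equiv.symm_apply_eq, mem_iff_part_eq P (e i).2 b]
    exact ⟨fun h => congrArg Subtype.val h, fun h => Subtype.ext h⟩

lemma count_nonsurj (P : Finpartition (univ : Finset α)) (hP : #P.parts ≠ k) :
    (univ.filter fun g : α → Fin k => pi g = P ∧ Surjective g) = ∅ := by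
  rw [Finset.filter_eq_empty_iff]
  rintro g - ⟨hgP, hgs⟩
  apply hP
  rw [← hgP, pi_parts_surj hgs, Finset.card_image_of_injective _ (fiber_injective hgs),
    Finset.card_univ, Fintype.card_fin]

end Fibers

lemma WT_eq_parts_sum (ha0 : a 0 = 0) (k n : ℕ) :
    WT a k (Fin n)
      = k.factorial *
          ∑ P ∈ univ.filter (fun P : Finpartition (univ : Finset (Fin n)) => #P.parts = k),
            ∏ B ∈ P.parts, a #B := by
  classical
  rw [WT, ← Finset.sum_fiberwise (univ : Finset (Fin n → Fin k)) (fun g => pi g)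
      (fun g => ∏ i : Fin k, a (#(univ.filter fun x => g x = i)))]
  rw [Finset.mul_sum, Finset.sum_filter]
  refine Finset.sum_congr rfl fun P _ => ?_
  have step1 : ∑ g ∈ univ.filter (fun g : Fin n → Fin k => pi g = P),
        ∏ i : Fin k, a (#(univ.filter fun x => g x = i))
      = ∑ g ∈ univ.filter (fun g : Fin n → Fin k => pi g = P ∧ Surjective g),
        ∏ i : Fin k, a (#(univ.filter fun x => g x = i)) := by
    symm
    refine Finset.sum_subset (fun g hg => ?_) ?_
    · simp only [mem_filter, mem_univ, true_and] at hg ⊢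
      exact hg.1
    intro g hg hg'
    simp only [mem_filter, mem_univ, true_and] at hg hg'
    have hns : ¬ Surjective g := fun hs => hg' ⟨hg, hs⟩
    rw [Function.Surjective] at hns
    push_neg at hns
    obtain ⟨i, hi⟩ := hns
    refine Finset.prod_eq_zero (mem_univ i) ?_
    have : univ.filter (fun x => g x = i) = ∅ := by
      rw [Finset.filter_eq_empty_iff]
      exact fun x _ => hi x
    rw [this]
    simpa using ha0
  rw [step1]
  have step2 : ∀ g ∈ univ.filter (fun g : Fin n → Fin k => pi g = P ∧ Surjective g),
      ∏ i : Fin k, a (#(univ.filter fun x => g x = i)) = ∏ B ∈ P.parts, a #B := by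
    intro g hg
    have h := (Finset.mem_filter.mp hg).2
    rw [← h.1, weight_eq a h.2]
  rw [Finset.sum_congr rfl step2, Finset.sum_const, smul_eq_mul]
  by_cases hP : #P.parts = k
  · rw [count_surj P hP, if_pos hP]
  · rw [count_nonsurj P hP, if_neg hP]
    simp



end ExpFormula19

/-- Exponential formula. Let `a : ℕ → ℕ` with `a 0 = 0`, and let
`c n = ∑_P ∏_{B ∈ P} a |B|`, the sum over all partitions `P` of `{1, …, n}` into
nonempty blocks (`c 0 = 1`, the empty partition). Then the exponential generating
functions satisfy `∑ c n X^n/n! = exp (∑ a n X^n/n!)` as formal power series over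
`ℚ`; since `F = ∑ a n X^n/n!` has zero constant term, `exp F = ∑_k F^k/k!` is
expressed coefficientwise: the `n`-th coefficient of `exp F` is
`∑_{k ≤ n} (coeff n (F^k)) / k!`. -/
theorem set_construction_egf_is_exp_of_egf
    (a : ℕ → ℕ) (ha0 : a 0 = 0)
    (c : ℕ → ℕ)
    (hc : ∀ n : ℕ, c n =
      ∑ P : Finpartition (Finset.univ : Finset (Fin n)), ∏ B ∈ P.parts, a B.card) :
    ∀ n : ℕ, (c n : ℚ) / n.factorial
      = ∑ k ∈ Finset.range (n + 1),
          (PowerSeries.coeff (R := ℚ) n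
            ((PowerSeries.mk fun m : ℕ => (a m : ℚ) / m.factorial) ^ k))
            / k.factorial := by
  intro n
  have key : ∀ k : ℕ,
      (PowerSeries.coeff (R := ℚ) n
          ((PowerSeries.mk fun m : ℕ => (a m : ℚ) / m.factorial) ^ k)) / k.factorial
        = ((∑ P ∈ Finset.univ.filter
              (fun P : Finpartition (Finset.univ : Finset (Fin n)) => P.parts.card = k),
            ∏ B ∈ P.parts, a B.card : ℕ) : ℚ) / n.factorial := by
    intro k
    rw [ExpFormula19.coeff_pow_eq, ExpFormula19.WT_eq_parts_sum a ha0]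
    have hk : (k.factorial : ℚ) ≠ 0 := by exact_mod_cast k.factorial_ne_zero
    have hn : (n.factorial : ℚ) ≠ 0 := by exact_mod_cast n.factorial_ne_zero
    push_cast
    field_simp
  rw [Finset.sum_congr rfl fun k _ => key k, ← Finset.sum_div]
  rw [hc n]
  congr 1
  push_cast
  refine (Finset.sum_fiberwise_of_maps_to (fun P _ => Finset.mem_range.mpr ?_) _).symm
  exact Nat.lt_succ_of_le (le_trans P.card_parts_le_card (by simp))
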